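/- (Averaging lemma, deterministic version) Let F: ℝ^p → ℝ be convex with minimum F*. Suppose sequences (x_k)_{k≥1} in ℝ^p, nonnegative (T_k)_{k≥0}, (β_k)_{k≥1} ≥ 0, (δ_k)_{k≥1} ⊂ (0,1), and α > 0 satisfy (δ_k/α)(F(x_k) - F*) + T_k ≤ (1 - δ_k) T_{k-1} + β_k for all k ≥ 1. Define Γ_k = ∏_{t=1}^k (1-δ_t) and the averages x̂_k = (1 - δ_k) x̂_{k-1} + δ_k x_k for any initial x̂_0. Then for all k ≥ 1: F(x̂_k) - F* + α T_k ≤ Γ_k (F(x̂_0) - F* + α T_0 + α ∑_{t=1}^k β_t/Γ_t). -/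

import Mathlib

theorem stmt11 {p : ℕ} (F : EuclideanSpace ℝ (Fin p) → ℝ) (Fstar : ℝ)
    (hF : ConvexOn ℝ Set.univ F) (hFstar : ∀ x, Fstar ≤ F x)
    (x xhat : ℕ → EuclideanSpace ℝ (Fin p)) (T β δ : ℕ → ℝ) (α : ℝ) (hα : 0 < α)
    (hT : ∀ k, 0 ≤ T k) (hβ : ∀ k ≥ 1, 0 ≤ β k)
    (hδ : ∀ k ≥ 1, 0 < δ k ∧ δ k < 1)
    (hrec : ∀ k ≥ 1, δ k / α * (F (x k) - Fstar) + T k ≤ (1 - δ k) * T (k - 1) + β k)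
    (hxhat : ∀ k ≥ 1, xhat k = (1 - δ k) • xhat (k - 1) + δ k • x k)
    (k : ℕ) (hk : 1 ≤ k) :
    F (xhat k) - Fstar + α * T k ≤
      (∏ t ∈ Finset.Icc 1 k, (1 - δ t)) *
        (F (xhat 0) - Fstar + α * T 0 +
          α * ∑ t ∈ Finset.Icc 1 k, β t / ∏ i ∈ Finset.Icc 1 t, (1 - δ i)) := by
  have hΓpos : ∀ n : ℕ, 0 < ∏ t ∈ Finset.Icc 1 n, (1 - δ t) := by
    intro n
    apply Finset.prod_pos
    intro t ht
    have := (hδ t (Finset.mem_Icc.mp ht).1).2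
    linarith
  -- one-step bound
  have hstep : ∀ m ≥ 1, F (xhat m) - Fstar + α * T m ≤
      (1 - δ m) * (F (xhat (m - 1)) - Fstar + α * T (m - 1)) + α * β m := by
    intro m hm
    obtain ⟨hδ0, hδ1⟩ := hδ m hm
    have hconv : F (xhat m) ≤ (1 - δ m) * F (xhat (m - 1)) + δ m * F (x m) := by
      rw [hxhat m hm]
      exact hF.2 (Set.mem_univ _) (Set.mem_univ _) (by linarith) (le_of_lt hδ0) (by ring)
    have hr := hrec m hm
    have hr' : δ m * (F (x m) - Fstar) + α * T m ≤
        α * ((1 - δ m) * T (m - 1)) + α * β m := by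
      have := mul_le_mul_of_nonneg_left hr (le_of_lt hα)
      have hne : α ≠ 0 := ne_of_gt hα
      field_simp at this
      nlinarith [this]
    nlinarith [hconv, hr']
  induction k, hk using Nat.le_induction with
  | base =>
    have h := hstep 1 le_rfl
    simp only [Finset.Icc_self, Finset.prod_singleton, Finset.sum_singleton] at *
    obtain ⟨hδ0, hδ1⟩ := hδ 1 le_rfl
    have hne : (1 : ℝ) - δ 1 ≠ 0 := by linarith
    have : (1 - δ 1) * (F (xhat 0) - Fstar + α * T 0 + α * (β 1 / (1 - δ 1)))
        = (1 - δ 1) * (F (xhat 0) - Fstar + α * T 0) + α * β 1 := by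
      field_simp
    rw [this]
    simpa using h
  | succ n hn ih =>
    have h := hstep (n + 1) (by omega)
    simp only [Nat.add_sub_cancel] at h
    have hδn := hδ (n + 1) (by omega)
    have hΓn := hΓpos n
    have hΓn1 := hΓpos (n + 1)
    rw [Finset.prod_Icc_succ_top (by omega : 1 ≤ n + 1),
        Finset.sum_Icc_succ_top (by omega : 1 ≤ n + 1)]
    have hne1 : (1 : ℝ) - δ (n + 1) ≠ 0 := by linarith [hδn.2]
    have key : (∏ t ∈ Finset.Icc 1 n, (1 - δ t)) * (1 - δ (n + 1)) *
        (F (xhat 0) - Fstar + α * T 0 +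
          α * ((∑ t ∈ Finset.Icc 1 n, β t / ∏ i ∈ Finset.Icc 1 t, (1 - δ i)) +
            β (n + 1) / ∏ i ∈ Finset.Icc 1 (n + 1), (1 - δ i)))
        = (1 - δ (n + 1)) * ((∏ t ∈ Finset.Icc 1 n, (1 - δ t)) *
            (F (xhat 0) - Fstar + α * T 0 +
              α * ∑ t ∈ Finset.Icc 1 n, β t / ∏ i ∈ Finset.Icc 1 t, (1 - δ i)))
          + α * β (n + 1) := by
      rw [Finset.prod_Icc_succ_top (by omega : 1 ≤ n + 1)]
      field_simp
      ring
    rw [key]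
    have h2 := mul_le_mul_of_nonneg_left ih (by linarith [hδn.2] : (0:ℝ) ≤ 1 - δ (n + 1))
    linarith
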